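/- Let {f_i}_{i=1}^∞ be identically distributed nonnegative random variables with a Cauchy tail, i.e., there exists C₀ > 0 such that P(f_i > n) < C₀/n for all n ∈ ℕ. Then for every ε > 0 there exist K > 0 and N ∈ ℕ such that for every n > N, P((1/n) Σ_{i=1}^n f_i > K log n) < ε. -/

import Mathlib

open MeasureTheory Finset
open scoped ENNReal


lemma min_le_one_add_sum_ind (x : ℝ) (hx : 0 ≤ x) (M : ℕ) :
    min x (M : ℝ) ≤ 1 + ∑ k ∈ Icc 1 M, (if (k : ℝ) < x then (1 : ℝ) else 0) := by
  induction M with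
  | zero => simpa using min_le_right x 0
  | succ M ih =>
    rw [Finset.sum_Icc_succ_top (by omega : 1 ≤ M + 1)]
    by_cases h : (M : ℝ) < x
    · have hall : ∀ k ∈ Icc 1 M, (if (k : ℝ) < x then (1 : ℝ) else 0) = 1 := by
        intro k hk
        rw [if_pos (lt_of_le_of_lt (by exact_mod_cast (mem_Icc.mp hk).2) h)]
      rw [Finset.sum_congr rfl hall, Finset.sum_const, Nat.card_Icc]
      have h1 : min x ((M + 1 : ℕ) : ℝ) ≤ (M : ℝ) + 1 := by
        have := min_le_right x ((M + 1 : ℕ) : ℝ); push_cast at this ⊢; linarith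
      have h2 : (0 : ℝ) ≤ if ((M + 1 : ℕ) : ℝ) < x then (1 : ℝ) else 0 := by positivity
      simp only [Nat.add_sub_cancel, nsmul_eq_mul, mul_one]
      linarith
    · push_neg at h
      have h1 : min x ((M + 1 : ℕ) : ℝ) = min x (M : ℝ) := by
        rw [min_eq_left h, min_eq_left (by push_cast; linarith)]
      have h2 : (0 : ℝ) ≤ if ((M + 1 : ℕ) : ℝ) < x then (1 : ℝ) else 0 := by positivity
      rw [h1]
      linarith [ih]

lemma harmonic_sum_le (M : ℕ) : ∑ k ∈ Icc 1 M, (k : ℝ)⁻¹ ≤ 1 + Real.log M := by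
  have h := harmonic_le_one_add_log M
  rw [harmonic_eq_sum_Icc] at h
  push_cast at h
  exact h

lemma trunc_lintegral_le {Ω : Type*} [MeasurableSpace Ω] (P : Measure Ω) [IsProbabilityMeasure P]
    (g : Ω → ℝ) (hg : Measurable g) (hgn : ∀ x, 0 ≤ g x)
    (C₀ : ℝ) (hC₀ : 0 < C₀)
    (htail : ∀ k : ℕ, 0 < k → P {x | (k : ℝ) < g x} ≤ ENNReal.ofReal (C₀ / k))
    (M : ℕ) :
    ∫⁻ x, ENNReal.ofReal (min (g x) M) ∂P ≤ ENNReal.ofReal (1 + C₀ * (1 + Real.log M)) := by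
  have key : ∀ x, ENNReal.ofReal (min (g x) M) ≤
      1 + ∑ k ∈ Icc 1 M, Set.indicator {y | (k : ℝ) < g y} (1 : Ω → ℝ≥0∞) x := by
    intro x
    calc ENNReal.ofReal (min (g x) M)
        ≤ ENNReal.ofReal (1 + ∑ k ∈ Icc 1 M, (if (k : ℝ) < g x then (1 : ℝ) else 0)) :=
          ENNReal.ofReal_le_ofReal (min_le_one_add_sum_ind _ (hgn x) M)
      _ = _ := by
          rw [ENNReal.ofReal_add (by norm_num) (by positivity),
            ENNReal.ofReal_sum_of_nonneg (fun k _ => by positivity)]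
          simp [Set.indicator_apply, apply_ite ENNReal.ofReal]
  have hms : ∀ k : ℕ, MeasurableSet {y | (k : ℝ) < g y} := fun k =>
    measurableSet_lt measurable_const hg
  calc ∫⁻ x, ENNReal.ofReal (min (g x) M) ∂P
      ≤ ∫⁻ x, (1 + ∑ k ∈ Icc 1 M, Set.indicator {y | (k : ℝ) < g y} (1 : Ω → ℝ≥0∞) x) ∂P :=
        lintegral_mono key
    _ = 1 + ∑ k ∈ Icc 1 M, P {y | (k : ℝ) < g y} := by
        rw [lintegral_add_left measurable_const,
          lintegral_finset_sum (f := fun (k : ℕ) => Set.indicator {y | (k : ℝ) < g y} (1 : Ω → ℝ≥0∞))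
            _ (fun k _ => measurable_const.indicator (hms k))]
        rw [lintegral_one, measure_univ, Finset.sum_congr rfl
          (fun k (_ : k ∈ Icc 1 M) => lintegral_indicator_one (μ := P) (hms k))]
    _ ≤ 1 + ∑ k ∈ Icc 1 M, ENNReal.ofReal (C₀ / k) := by
        gcongr with k hk
        exact htail k (mem_Icc.mp hk).1
    _ = ENNReal.ofReal (1 + ∑ k ∈ Icc 1 M, C₀ / k) := by
        rw [ENNReal.ofReal_add (by norm_num) (Finset.sum_nonneg fun k _ => by positivity),
          ENNReal.ofReal_sum_of_nonneg (fun k _ => by positivity), ENNReal.ofReal_one]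
    _ ≤ _ := by
        apply ENNReal.ofReal_le_ofReal
        have : ∑ k ∈ Icc 1 M, C₀ / k = C₀ * ∑ k ∈ Icc 1 M, (k : ℝ)⁻¹ := by
          rw [Finset.mul_sum]; exact Finset.sum_congr rfl fun k _ => by ring
        rw [this]
        have := harmonic_sum_le M
        nlinarith [harmonic_sum_le M]

/-- Identically distributed nonnegative random variables with a Cauchy tail:
the empirical average up to time `n` is at most `K log n` up to probability `ε`. -/
theorem cauchy_tail_average_log_bound
    {Ω : Type*} [MeasurableSpace Ω] (P : Measure Ω) [IsProbabilityMeasure P]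
    (f : ℕ → Ω → ℝ) (hmeas : ∀ i, Measurable (f i))
    (hnonneg : ∀ i x, 0 ≤ f i x)
    (hident : ∀ i j, Measure.map (f i) P = Measure.map (f j) P)
    (C₀ : ℝ) (hC₀ : 0 < C₀)
    (htail : ∀ i, ∀ n : ℕ, 0 < n → P {x | (n : ℝ) < f i x} < ENNReal.ofReal (C₀ / n)) :
    ∀ ε > (0 : ℝ), ∃ K > (0 : ℝ), ∃ N : ℕ, ∀ n > N,
      P {x | K * Real.log n < (1 / n) * ∑ i ∈ Icc 1 n, f i x} < ENNReal.ofReal ε := by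
  intro ε hε
  set K : ℝ := 4 * (1 + 2 * C₀) / ε with hK
  have hKpos : 0 < K := by positivity
  refine ⟨K, hKpos, ?_⟩
  set t : ℝ := 4 * (1 + C₀) / (K * ε) with ht
  have htpos : 0 < t := by positivity
  refine ⟨⌈Real.exp t⌉₊ + ⌈4 * C₀ / ε⌉₊ + 2, ?_⟩
  intro n hn
  -- basic facts about n
  have hn2 : 2 ≤ n := by omega
  have hnR1 : (1 : ℝ) < n := by exact_mod_cast Nat.lt_of_lt_of_le Nat.one_lt_two hn2
  have hnRpos : (0 : ℝ) < n := by linarith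
  have hlog : 0 < Real.log n := Real.log_pos hnR1
  have hlogt : t < Real.log n := by
    rw [Real.lt_log_iff_exp_lt hnRpos]
    calc Real.exp t ≤ (⌈Real.exp t⌉₊ : ℝ) := Nat.le_ceil _
      _ < n := by exact_mod_cast (by omega : ⌈Real.exp t⌉₊ < n)
  have hCn : C₀ / n < ε / 4 := by
    have h1 : 4 * C₀ / ε < (n : ℝ) := by
      calc 4 * C₀ / ε ≤ (⌈4 * C₀ / ε⌉₊ : ℝ) := Nat.le_ceil _
        _ < n := by exact_mod_cast (by omega : ⌈4 * C₀ / ε⌉₊ < n)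
    rw [div_lt_div_iff₀ hnRpos (by norm_num)]
    rw [div_lt_iff₀ hε] at h1
    nlinarith
  -- truncation level
  have hMpos : 0 < n ^ 2 := by positivity
  have hMcast : ((n ^ 2 : ℕ) : ℝ) = (n : ℝ) ^ 2 := by push_cast; ring
  -- events
  set A : Set Ω := ⋃ i ∈ Icc 1 n, {x | ((n ^ 2 : ℕ) : ℝ) < f i x} with hA
  set S : Ω → ℝ≥0∞ := fun x => ∑ i ∈ Icc 1 n, ENNReal.ofReal (min (f i x) ((n ^ 2 : ℕ) : ℝ))
    with hS
  set a : ℝ≥0∞ := ENNReal.ofReal ((n : ℝ) * (K * Real.log n)) with ha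
  set B0 : ℝ := 1 + C₀ * (1 + Real.log ((n ^ 2 : ℕ) : ℝ)) with hB0
  have hB0' : B0 = 1 + C₀ + 2 * C₀ * Real.log n := by
    rw [hB0, hMcast, Real.log_pow]; push_cast; ring
  have hB0pos : 0 < B0 := by rw [hB0']; nlinarith
  -- inclusion of the bad event
  have hsub : {x | K * Real.log n < (1 / n) * ∑ i ∈ Icc 1 n, f i x} ⊆
      A ∪ {x | a ≤ S x} := by
    intro x hx
    by_cases hxA : x ∈ A
    · exact Or.inl hxA
    · refine Or.inr ?_
      simp only [hA, Set.mem_iUnion, Set.mem_setOf_eq, not_exists, not_lt] at hxA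
      have hmin : ∀ i ∈ Icc 1 n, min (f i x) ((n ^ 2 : ℕ) : ℝ) = f i x := fun i hi =>
        min_eq_left (hxA i hi)
      have hsum : S x = ENNReal.ofReal (∑ i ∈ Icc 1 n, f i x) := by
        rw [hS, ENNReal.ofReal_sum_of_nonneg (fun i _ => hnonneg i x)]
        exact Finset.sum_congr rfl fun i hi => by rw [hmin i hi]
      have hxlt : (n : ℝ) * (K * Real.log n) < ∑ i ∈ Icc 1 n, f i x := by
        have := hx
        simp only [Set.mem_setOf_eq] at this
        rw [one_div, inv_mul_eq_div, lt_div_iff₀ hnRpos] at this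
        linarith [mul_comm (K * Real.log (n : ℝ)) ((n : ℝ))]
      rw [Set.mem_setOf_eq, hsum, ha]
      exact ENNReal.ofReal_le_ofReal hxlt.le
  -- tail weak bound
  have htail' : ∀ i, ∀ k : ℕ, 0 < k → P {x | (k : ℝ) < f i x} ≤ ENNReal.ofReal (C₀ / k) :=
    fun i k hk => (htail i k hk).le
  -- bound on P A
  have hPA : P A ≤ ENNReal.ofReal (C₀ / n) := by
    calc P A ≤ ∑ i ∈ Icc 1 n, P {x | ((n ^ 2 : ℕ) : ℝ) < f i x} :=
          measure_biUnion_finset_le _ _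
      _ ≤ ∑ i ∈ Icc 1 n, ENNReal.ofReal (C₀ / (n ^ 2 : ℕ)) :=
          Finset.sum_le_sum fun i _ => htail' i (n ^ 2) hMpos
      _ = (n : ℝ≥0∞) * ENNReal.ofReal (C₀ / (n ^ 2 : ℕ)) := by
          rw [Finset.sum_const, Nat.card_Icc, nsmul_eq_mul]; norm_num
      _ = ENNReal.ofReal ((n : ℝ) * (C₀ / (n ^ 2 : ℕ))) := by
          rw [ENNReal.ofReal_mul (by positivity), ENNReal.ofReal_natCast]
      _ = ENNReal.ofReal (C₀ / n) := by
          congr 1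
          rw [hMcast]
          field_simp
  -- Markov bound on the truncated sum
  have hSmeas : Measurable S :=
    Finset.measurable_sum _ fun i _ => ((hmeas i).min measurable_const).ennreal_ofReal
  have ha0 : a ≠ 0 := by
    rw [ha, Ne, ENNReal.ofReal_eq_zero, not_le]
    positivity
  have hatop : a ≠ ⊤ := ENNReal.ofReal_ne_top
  have hlint : ∫⁻ x, S x ∂P ≤ ENNReal.ofReal ((n : ℝ) * B0) := by
    calc ∫⁻ x, S x ∂P
        = ∑ i ∈ Icc 1 n, ∫⁻ x, ENNReal.ofReal (min (f i x) ((n ^ 2 : ℕ) : ℝ)) ∂P :=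
          lintegral_finset_sum _ fun i _ => ((hmeas i).min measurable_const).ennreal_ofReal
      _ ≤ ∑ i ∈ Icc 1 n, ENNReal.ofReal B0 :=
          Finset.sum_le_sum fun i _ =>
            trunc_lintegral_le P (f i) (hmeas i) (hnonneg i) C₀ hC₀ (htail' i) (n ^ 2)
      _ = (n : ℝ≥0∞) * ENNReal.ofReal B0 := by
          rw [Finset.sum_const, Nat.card_Icc, nsmul_eq_mul]; norm_num
      _ = ENNReal.ofReal ((n : ℝ) * B0) := by
          rw [ENNReal.ofReal_mul (by positivity), ENNReal.ofReal_natCast]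
  have hPB : P {x | a ≤ S x} ≤ ENNReal.ofReal (B0 / (K * Real.log n)) := by
    calc P {x | a ≤ S x} ≤ (∫⁻ x, S x ∂P) / a :=
          meas_ge_le_lintegral_div hSmeas.aemeasurable ha0 hatop
      _ ≤ ENNReal.ofReal ((n : ℝ) * B0) / a := by gcongr
      _ = ENNReal.ofReal ((n : ℝ) * B0 / ((n : ℝ) * (K * Real.log n))) := by
          rw [ha, ENNReal.ofReal_div_of_pos (by positivity)]
      _ = ENNReal.ofReal (B0 / (K * Real.log n)) := by
          rw [mul_div_mul_left _ _ (ne_of_gt hnRpos)]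
  -- final combination
  have hreal : C₀ / n + B0 / (K * Real.log n) < ε := by
    set L : ℝ := Real.log n
    have hsplit : B0 / (K * L) = (1 + C₀) / (K * L) + 2 * C₀ * L / (K * L) := by
      rw [hB0']; ring
    have hKL : 4 * (1 + C₀) / ε < K * L := by
      have : K * t = 4 * (1 + C₀) / ε := by
        rw [ht]
        field_simp
      rw [← this]
      exact mul_lt_mul_of_pos_left hlogt hKpos
    have h2 : (1 + C₀) / (K * L) < ε / 4 := by
      have := div_lt_div_of_pos_left (by linarith : (0:ℝ) < 1 + C₀) (by positivity) hKL
      calc (1 + C₀) / (K * L) < (1 + C₀) / (4 * (1 + C₀) / ε) := this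
        _ = ε / 4 := by field_simp
    have h3 : 2 * C₀ * L / (K * L) ≤ ε / 4 := by
      rw [mul_div_mul_right _ _ (ne_of_gt hlog)]
      rw [div_le_div_iff₀ hKpos (by norm_num : (0:ℝ) < 4)]
      have hεK : ε * K = 4 * (1 + 2 * C₀) := by rw [hK]; field_simp
      nlinarith
    rw [hsplit]
    linarith
  calc P {x | K * Real.log n < (1 / n) * ∑ i ∈ Icc 1 n, f i x}
      ≤ P A + P {x | a ≤ S x} := (measure_mono hsub).trans (measure_union_le _ _)
    _ ≤ ENNReal.ofReal (C₀ / n) + ENNReal.ofReal (B0 / (K * Real.log n)) :=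
        add_le_add hPA hPB
    _ = ENNReal.ofReal (C₀ / n + B0 / (K * Real.log n)) :=
        (ENNReal.ofReal_add (by positivity) (by positivity)).symm
    _ < ENNReal.ofReal ε := (ENNReal.ofReal_lt_ofReal_iff hε).2 hreal
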